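/- (Bounded advantage under forward KL) Let Ṽ₀ ∈ ℝ and suppose θ ∈ ℝ^{S×A} satisfies Ṽ_λ^{π_θ}(u) ≥ Ṽ₀. Set C_A := (r_max/(1−γ) − Ṽ₀)/(λ c_u). Then: (i) for every state s and action a, π_θ(a|s) ≥ exp( −(C_A + log|A|)/c_ref ); and (ii) the regularized advantage satisfies max_{s,a} |Ã_λ^{π_θ}(s,a)| ≤ (r_max + λ C_A)/(1−γ). -/

import Mathlib

open Finset

/-- The softmax policy `π_θ(a|s) = exp(θ_{sa})/∑_{a'} exp(θ_{sa'})`. -/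
noncomputable def softmaxPolicy {S A : Type*} [Fintype A]
    (θ : S × A → ℝ) (s : S) (a : A) : ℝ :=
  Real.exp (θ (s, a)) / ∑ a' : A, Real.exp (θ (s, a'))

/-- The `f`-divergence `D_f(p,q) := ∑_a q(a) f(p(a)/q(a))` of two probability vectors. -/
noncomputable def fDiv {A : Type*} [Fintype A] (f : ℝ → ℝ) (p q : A → ℝ) : ℝ :=
  ∑ a : A, q a * f (p a / q a)

/-- `π` is a policy: each `π(·|s)` is a strictly positive probability distribution on `A`. -/
def IsPolicy {S A : Type*} [Fintype A] (π : S → A → ℝ) : Prop :=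
  (∀ s a, 0 < π s a) ∧ ∀ s, ∑ a : A, π s a = 1

/-- `V` satisfies the Bellman equation of the `f`-divergence regularized value function
`Ṽ_λ^π`. -/
def IsRegValue {S A : Type*} [Fintype S] [Fintype A]
    (P : S → A → S → ℝ) (r : S → A → ℝ) (γ lam : ℝ) (f : ℝ → ℝ)
    (πref π : S → A → ℝ) (V : S → ℝ) : Prop :=
  ∀ s, V s = (∑ a : A, π s a * (r s a + γ * ∑ s' : S, P s a s' * V s')) -
      lam * fDiv f (π s) (πref s)

/-- The regularized Q-function `Q̃_λ^π`. -/
noncomputable def Qreg {S A : Type*} [Fintype S] [Fintype A]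
    (P : S → A → S → ℝ) (r : S → A → ℝ) (γ lam : ℝ) (f : ℝ → ℝ)
    (πref π : S → A → ℝ) (V : S → ℝ) (s : S) (a : A) : ℝ :=
  r s a - lam * fDiv f (π s) (πref s) + γ * ∑ s' : S, P s a s' * V s'

lemma wsum_le {ι : Type*} [Fintype ι] {w f : ι → ℝ} (hw : ∀ i, 0 ≤ w i)
    (hws : ∑ i, w i = 1) {c : ℝ} (hf : ∀ i, f i ≤ c) : ∑ i, w i * f i ≤ c := by
  calc ∑ i, w i * f i ≤ ∑ i, w i * c :=
        Finset.sum_le_sum fun i _ => mul_le_mul_of_nonneg_left (hf i) (hw i)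
  _ = c := by rw [← Finset.sum_mul, hws, one_mul]

lemma le_wsum {ι : Type*} [Fintype ι] {w f : ι → ℝ} (hw : ∀ i, 0 ≤ w i)
    (hws : ∑ i, w i = 1) {c : ℝ} (hf : ∀ i, c ≤ f i) : c ≤ ∑ i, w i * f i := by
  calc c = ∑ i, w i * c := by rw [← Finset.sum_mul, hws, one_mul]
  _ ≤ ∑ i, w i * f i :=
        Finset.sum_le_sum fun i _ => mul_le_mul_of_nonneg_left (hf i) (hw i)

lemma gibbs_term {p q : ℝ} (hp : 0 < p) (hq : 0 < q) : q - p ≤ q * Real.log (q / p) := by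
  have h := Real.log_le_sub_one_of_pos (div_pos hp hq)
  have hinv : Real.log (q / p) = -Real.log (p / q) := by
    rw [← Real.log_inv, inv_div]
  have h2 : 1 - p / q ≤ Real.log (q / p) := by rw [hinv]; linarith
  have h3 : q * (1 - p / q) = q - p := by field_simp
  nlinarith [mul_le_mul_of_nonneg_left h2 hq.le]

lemma entropy_le {A : Type*} [Fintype A] [Nonempty A] (q : A → ℝ)
    (hq : ∀ a, 0 < q a) (hs : ∑ a, q a = 1) :
    ∑ a, q a * (-Real.log (q a)) ≤ Real.log (Fintype.card A) := by
  set n : ℝ := (Fintype.card A : ℝ) with hn'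
  have hn : 0 < n := by rw [hn']; exact_mod_cast Fintype.card_pos
  have key : ∀ a, q a * (-Real.log (q a)) ≤ 1/n - q a + q a * Real.log n := by
    intro a
    have h1 : Real.log (1 / (n * q a)) ≤ 1/(n * q a) - 1 :=
      Real.log_le_sub_one_of_pos (by have := hq a; positivity)
    have h2 : Real.log (1 / (n * q a)) = -Real.log n - Real.log (q a) := by
      rw [one_div, Real.log_inv, Real.log_mul hn.ne' (hq a).ne']; ring
    have h3 : q a * (1/(n * q a) - 1) = 1/n - q a := by
      have hqa := (hq a).ne'
      have hnn := hn.ne'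
      field_simp
    have h4 := mul_le_mul_of_nonneg_left h1 (hq a).le
    rw [h3] at h4
    have h5 : q a * Real.log (1 / (n * q a)) = -(q a * Real.log n) - q a * Real.log (q a) := by
      rw [h2]; ring
    linarith
  calc ∑ a, q a * (-Real.log (q a)) ≤ ∑ a, (1/n - q a + q a * Real.log n) :=
        Finset.sum_le_sum fun a _ => key a
  _ = Real.log n := by
      rw [Finset.sum_add_distrib, Finset.sum_sub_distrib, ← Finset.sum_mul, hs,
        Finset.sum_const, Finset.card_univ, nsmul_eq_mul]
      field_simp
      linarith [hn']

/-- (Bounded advantage under forward KL) If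
`Ṽ_λ^{π_θ}(u) ≥ Ṽ₀` and `C_A := (r_max/(1−γ) − Ṽ₀)/(λ c_u)`, then
(i) `π_θ(a|s) ≥ exp(−(C_A + log|A|)/c_ref)` for all `s, a`; and
(ii) `max_{s,a}|Ã_λ^{π_θ}(s,a)| ≤ (r_max + λ C_A)/(1−γ)`. -/
theorem bounded_advantage_forward_kl
    {S A : Type*} [Fintype S] [Fintype A] [Nonempty S] [Nonempty A]
    (P : S → A → S → ℝ) (hP : ∀ s a, (∀ s', 0 ≤ P s a s') ∧ ∑ s' : S, P s a s' = 1)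
    (r : S → A → ℝ) (rmax : ℝ) (hr : ∀ s a, 0 ≤ r s a ∧ r s a ≤ rmax)
    (γ : ℝ) (hγ0 : 0 ≤ γ) (hγ1 : γ < 1)
    (πref : S → A → ℝ) (hπref : IsPolicy πref)
    (cref : ℝ) (hcref : cref = ⨅ q : S × A, πref q.1 q.2)
    (lam : ℝ) (hlam : 0 < lam)
    (u : S → ℝ) (hu : (∀ s, 0 ≤ u s) ∧ ∑ s : S, u s = 1)
    (cu : ℝ) (hcu0 : 0 < cu) (hcu : ∀ s, cu ≤ u s)
    (θ : EuclideanSpace ℝ (S × A))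
    (V : S → ℝ)
    (hV : IsRegValue P r γ lam (fun x => -Real.log x) πref (softmaxPolicy θ) V)
    (V0 : ℝ) (hV0 : V0 ≤ ∑ s : S, u s * V s)
    (CA : ℝ) (hCA : CA = (rmax / (1 - γ) - V0) / (lam * cu)) :
    (∀ (s : S) (a : A),
      Real.exp (-(CA + Real.log (Fintype.card A)) / cref) ≤ softmaxPolicy θ s a) ∧
    (∀ (s : S) (a : A),
      |Qreg P r γ lam (fun x => -Real.log x) πref (softmaxPolicy θ) V s a - V s| ≤
        (rmax + lam * CA) / (1 - γ)) := by
  classical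
  obtain ⟨hrefpos, hrefsum⟩ := hπref
  obtain ⟨hu0, husum⟩ := hu
  set π : S → A → ℝ := softmaxPolicy θ with hπdef
  have hγ' : 0 < 1 - γ := by linarith
  have hA1 : (1 : ℝ) ≤ (Fintype.card A : ℝ) := by
    exact_mod_cast Fintype.card_pos
  have hlogA : 0 ≤ Real.log (Fintype.card A) := Real.log_nonneg hA1
  have hrmax0 : 0 ≤ rmax := by
    obtain ⟨s⟩ := ‹Nonempty S›; obtain ⟨a⟩ := ‹Nonempty A›
    exact le_trans (hr s a).1 (hr s a).2
  -- softmax is a policy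
  have hπpos : ∀ s a, 0 < π s a := by
    intro s a
    have h1 : 0 < ∑ a' : A, Real.exp (θ (s, a')) :=
      Finset.sum_pos (fun a' _ => Real.exp_pos _) Finset.univ_nonempty
    exact div_pos (Real.exp_pos _) h1
  have hπsum : ∀ s, ∑ a : A, π s a = 1 := by
    intro s
    have h1 : 0 < ∑ a' : A, Real.exp (θ (s, a')) :=
      Finset.sum_pos (fun a' _ => Real.exp_pos _) Finset.univ_nonempty
    simp only [hπdef, softmaxPolicy, ← Finset.sum_div]
    exact div_self h1.ne'
  have hπle1 : ∀ s a, π s a ≤ 1 := by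
    intro s a
    calc π s a ≤ ∑ a' : A, π s a' :=
          Finset.single_le_sum (fun a' _ => (hπpos s a').le) (Finset.mem_univ a)
    _ = 1 := hπsum s
  -- the KL divergence term
  set D : S → ℝ := fun s => fDiv (fun x => -Real.log x) (π s) (πref s) with hDdef
  have hDalt : ∀ s, D s = ∑ a : A, πref s a * Real.log (πref s a / π s a) := by
    intro s
    simp only [hDdef, fDiv]
    refine Finset.sum_congr rfl fun a _ => ?_
    rw [← Real.log_inv, inv_div]
  have hD0 : ∀ s, 0 ≤ D s := by
    intro s
    rw [hDalt s]
    have h1 : (0:ℝ) = ∑ a : A, (πref s a - π s a) := by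
      rw [Finset.sum_sub_distrib, hrefsum, hπsum]; ring
    rw [h1]
    exact Finset.sum_le_sum fun a _ => gibbs_term (hπpos s a) (hrefpos s a)
  -- shorthand g s a = r s a + γ P V
  set g : S → A → ℝ := fun s a => r s a + γ * ∑ s' : S, P s a s' * V s' with hgdef
  have hVg : ∀ s, V s = (∑ a : A, π s a * g s a) - lam * D s := fun s => hV s
  -- upper bound on V
  have hVub : ∀ s, V s ≤ rmax / (1 - γ) := by
    obtain ⟨s0, _, hs0⟩ := Finset.exists_max_image (Finset.univ : Finset S) V
      Finset.univ_nonempty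
    have hM : ∀ s, V s ≤ V s0 := fun s => hs0 s (Finset.mem_univ s)
    have hgub : ∀ a, g s0 a ≤ rmax + γ * V s0 := by
      intro a
      have hPV : ∑ s' : S, P s0 a s' * V s' ≤ V s0 :=
        wsum_le (hP s0 a).1 (hP s0 a).2 hM
      have h1 := (hr s0 a).2
      have h2 := mul_le_mul_of_nonneg_left hPV hγ0
      simp only [hgdef]
      linarith
    have h1 : V s0 ≤ rmax + γ * V s0 := by
      have h2 : ∑ a : A, π s0 a * g s0 a ≤ rmax + γ * V s0 :=
        wsum_le (fun a => (hπpos s0 a).le) (hπsum s0) hgub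
      have h3 := hVg s0
      have h4 : 0 ≤ lam * D s0 := mul_nonneg hlam.le (hD0 s0)
      linarith
    have h5 : V s0 ≤ rmax / (1 - γ) := by
      rw [le_div_iff₀ hγ']; nlinarith
    intro s; exact le_trans (hM s) h5
  -- per-action upper bound on g
  have hgub : ∀ s a, g s a ≤ rmax / (1 - γ) := by
    intro s a
    have hPV : ∑ s' : S, P s a s' * V s' ≤ rmax / (1 - γ) :=
      wsum_le (hP s a).1 (hP s a).2 hVub
    have h1 := (hr s a).2
    have h2 : γ * (∑ s' : S, P s a s' * V s') ≤ γ * (rmax / (1 - γ)) :=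
      mul_le_mul_of_nonneg_left hPV hγ0
    have h3 : rmax + γ * (rmax / (1 - γ)) = rmax / (1 - γ) := by
      field_simp; ring
    simp only [hgdef]
    linarith
  -- refined upper bound on V
  have hVub' : ∀ s, V s ≤ rmax / (1 - γ) - lam * D s := by
    intro s
    have h2 : ∑ a : A, π s a * g s a ≤ rmax / (1 - γ) :=
      wsum_le (fun a => (hπpos s a).le) (hπsum s) (hgub s)
    have h3 := hVg s
    linarith
  -- bound D by CA
  have hCAkey : rmax / (1 - γ) - V0 = CA * (lam * cu) := by
    rw [hCA]; field_simp
  have hDCA : ∀ s, D s ≤ CA := by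
    intro s
    have hsum : lam * ∑ t : S, u t * D t ≤ rmax / (1 - γ) - V0 := by
      have h1 : ∑ t : S, u t * V t ≤ ∑ t : S, u t * (rmax / (1 - γ) - lam * D t) :=
        Finset.sum_le_sum fun t _ => mul_le_mul_of_nonneg_left (hVub' t) (hu0 t)
      have h2 : ∑ t : S, u t * (rmax / (1 - γ) - lam * D t)
          = rmax / (1 - γ) - lam * ∑ t : S, u t * D t := by
        calc ∑ t : S, u t * (rmax / (1 - γ) - lam * D t)
            = ∑ t : S, (u t * (rmax / (1 - γ)) - lam * (u t * D t)) := by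
              refine Finset.sum_congr rfl fun t _ => by ring
        _ = (∑ t : S, u t) * (rmax / (1 - γ)) - lam * ∑ t : S, u t * D t := by
              rw [Finset.sum_sub_distrib, ← Finset.sum_mul, ← Finset.mul_sum]
        _ = rmax / (1 - γ) - lam * ∑ t : S, u t * D t := by rw [husum, one_mul]
      linarith
    have h3 : cu * D s ≤ ∑ t : S, u t * D t := by
      calc cu * D s ≤ u s * D s := mul_le_mul_of_nonneg_right (hcu s) (hD0 s)
      _ ≤ ∑ t : S, u t * D t :=
          Finset.single_le_sum (fun t _ => mul_nonneg (hu0 t) (hD0 t)) (Finset.mem_univ s)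
    have h4 : lam * (cu * D s) ≤ CA * (lam * cu) := by
      rw [← hCAkey]
      calc lam * (cu * D s) ≤ lam * ∑ t : S, u t * D t :=
        mul_le_mul_of_nonneg_left h3 hlam.le
      _ ≤ rmax / (1 - γ) - V0 := hsum
    have h5 : 0 < lam * cu := mul_pos hlam hcu0
    nlinarith
  have hCA0 : 0 ≤ CA := by
    obtain ⟨s⟩ := ‹Nonempty S›
    exact le_trans (hD0 s) (hDCA s)
  -- lower bound on V
  have hVlb : ∀ s, -(lam * CA) / (1 - γ) ≤ V s := by
    obtain ⟨s1, _, hs1⟩ := Finset.exists_min_image (Finset.univ : Finset S) V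
      Finset.univ_nonempty
    have hm : ∀ s, V s1 ≤ V s := fun s => hs1 s (Finset.mem_univ s)
    have hglb : ∀ a, γ * V s1 ≤ g s1 a := by
      intro a
      have hPV : V s1 ≤ ∑ s' : S, P s1 a s' * V s' :=
        le_wsum (hP s1 a).1 (hP s1 a).2 hm
      have h1 := (hr s1 a).1
      have h2 := mul_le_mul_of_nonneg_left hPV hγ0
      simp only [hgdef]
      linarith
    have h1 : γ * V s1 - lam * CA ≤ V s1 := by
      have h2 : γ * V s1 ≤ ∑ a : A, π s1 a * g s1 a :=
        le_wsum (fun a => (hπpos s1 a).le) (hπsum s1) hglb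
      have h3 := hVg s1
      have h4 : lam * D s1 ≤ lam * CA := mul_le_mul_of_nonneg_left (hDCA s1) hlam.le
      linarith
    have h5 : -(lam * CA) / (1 - γ) ≤ V s1 := by
      rw [div_le_iff₀ hγ']; nlinarith
    intro s; exact le_trans h5 (hm s)
  -- positivity of cref
  have hcrefle : ∀ s a, cref ≤ πref s a := by
    intro s a
    rw [hcref]
    exact ciInf_le (Finite.bddBelow_range _) (s, a)
  have hcrefpos : 0 < cref := by
    obtain ⟨q0, hq0⟩ := Finite.exists_min (fun q : S × A => πref q.1 q.2)
    have : πref q0.1 q0.2 ≤ cref := by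
      rw [hcref]; exact le_ciInf hq0
    exact lt_of_lt_of_le (hrefpos q0.1 q0.2) this
  constructor
  · -- part (i)
    intro s a
    have hent := entropy_le (πref s) (hrefpos s) (hrefsum s)
    have hkey : ∑ a' : A, πref s a' * (-Real.log (π s a'))
        = D s + ∑ a' : A, πref s a' * (-Real.log (πref s a')) := by
      rw [hDalt s, ← Finset.sum_add_distrib]
      refine Finset.sum_congr rfl fun a' _ => ?_
      rw [Real.log_div (hrefpos s a').ne' (hπpos s a').ne']
      ring
    have hterm : πref s a * (-Real.log (π s a)) ≤ CA + Real.log (Fintype.card A) := by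
      have h1 : πref s a * (-Real.log (π s a)) ≤ ∑ a' : A, πref s a' * (-Real.log (π s a')) := by
        exact Finset.single_le_sum (f := fun a' => πref s a' * (-Real.log (π s a')))
          (fun a' _ => mul_nonneg (hrefpos s a').le
            (neg_nonneg.mpr (Real.log_nonpos (hπpos s a').le (hπle1 s a'))))
          (Finset.mem_univ a)
      rw [hkey] at h1
      have := hDCA s
      linarith
    set X := CA + Real.log (Fintype.card A) with hX
    have hX0 : 0 ≤ X := by rw [hX]; linarith
    have h2 : -Real.log (π s a) ≤ X / πref s a := by
      rw [le_div_iff₀ (hrefpos s a)]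
      linarith [hterm, mul_comm (πref s a) (-Real.log (π s a))]
    have h3 : X / πref s a ≤ X / cref :=
      div_le_div_of_nonneg_left hX0 hcrefpos (hcrefle s a)
    have h4 : -X / cref ≤ Real.log (π s a) := by
      rw [neg_div]; linarith
    calc Real.exp (-X / cref) ≤ Real.exp (Real.log (π s a)) := Real.exp_le_exp.mpr h4
    _ = π s a := Real.exp_log (hπpos s a)
  · -- part (ii)
    intro s a
    have hglb : ∀ s a, γ * (-(lam * CA) / (1 - γ)) ≤ g s a := by
      intro s a
      have hPV : -(lam * CA) / (1 - γ) ≤ ∑ s' : S, P s a s' * V s' :=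
        le_wsum (hP s a).1 (hP s a).2 hVlb
      have h1 := (hr s a).1
      have h2 := mul_le_mul_of_nonneg_left hPV hγ0
      simp only [hgdef]
      linarith
    have hAdv : Qreg P r γ lam (fun x => -Real.log x) πref π V s a - V s
        = g s a - ∑ a' : A, π s a' * g s a' := by
      rw [hV s]
      simp only [Qreg, hgdef]
      ring
    have hlo := hglb s a
    have hhi := hgub s a
    have hslo : γ * (-(lam * CA) / (1 - γ)) ≤ ∑ a' : A, π s a' * g s a' :=
      le_wsum (fun a' => (hπpos s a').le) (hπsum s) (fun a' => hglb s a')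
    have hshi : ∑ a' : A, π s a' * g s a' ≤ rmax / (1 - γ) :=
      wsum_le (fun a' => (hπpos s a').le) (hπsum s) (hgub s)
    have hwidth : rmax / (1 - γ) - γ * (-(lam * CA) / (1 - γ)) ≤ (rmax + lam * CA) / (1 - γ) := by
      have e1 : rmax / (1 - γ) - γ * (-(lam * CA) / (1 - γ))
          = (rmax + γ * (lam * CA)) / (1 - γ) := by field_simp; ring
      have h6 : rmax + γ * (lam * CA) ≤ rmax + lam * CA := by
        nlinarith [mul_nonneg (mul_nonneg hlam.le hCA0) hγ'.le]
      rw [e1]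
      exact (div_le_div_iff_of_pos_right hγ').mpr h6
    rw [hAdv, abs_le]
    constructor <;> linarith
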